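/- For every k ≥ 2, the family H_k of all non-IP_k-sets is an ideal on ω: it is closed under taking subsets (if A ∈ H_k and B ⊆ A then B ∈ H_k) and under finite unions (if A, B ∈ H_k then A ∪ B ∈ H_k). -/

import Mathlib

/-- Infinite Ramsey theorem for `k`-element subsets of an infinite set of naturals. -/
lemma ramsey_infinite : ∀ (k : ℕ) (c : Finset ℕ → Bool) (S : Set ℕ), S.Infinite →
    ∃ T, T ⊆ S ∧ T.Infinite ∧ ∃ v, ∀ F : Finset ℕ, ↑F ⊆ T → F.card = k → c F = v := by
  intro k
  induction k with
  | zero =>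
    intro c S hS
    refine ⟨S, subset_rfl, hS, c ∅, ?_⟩
    intro F hF hcard
    rw [Finset.card_eq_zero] at hcard
    rw [hcard]
  | succ k IH =>
    intro c S hS
    -- one-step lemma
    have step : ∀ X : Set ℕ, X.Infinite → ∃ (a : ℕ) (T : Set ℕ) (b : Bool),
        a ∈ X ∧ T ⊆ X ∧ (∀ x ∈ T, a < x) ∧ T.Infinite ∧
        ∀ F : Finset ℕ, ↑F ⊆ T → F.card = k → c (insert a F) = b := by
      intro X hX
      obtain ⟨a, haX⟩ := hX.nonempty
      have hX' : (X ∩ Set.Ioi a).Infinite :=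
        (hX.diff (Set.finite_Iic a)).mono (fun x hx => ⟨hx.1, lt_of_not_ge (show ¬ x ≤ a from hx.2)⟩)
      obtain ⟨T, hTsub, hTinf, v, hv⟩ := IH (fun F => c (insert a F)) _ hX'
      exact ⟨a, T, v, haX, fun x hx => (hTsub hx).1, fun x hx => (hTsub hx).2,
        hTinf, hv⟩
    choose Af Tf Bf h1 h2 h3 h4 h5 using step
    -- iterate
    let g : ℕ → {X : Set ℕ // X.Infinite} := fun n =>
      Nat.rec ⟨S, hS⟩ (fun _ p => ⟨Tf p.1 p.2, h4 p.1 p.2⟩) n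
    have hgsucc : ∀ n, (g (n+1)).1 = Tf (g n).1 (g n).2 := fun n => rfl
    set a : ℕ → ℕ := fun n => Af (g n).1 (g n).2 with ha
    set b : ℕ → Bool := fun n => Bf (g n).1 (g n).2 with hb
    have hmem : ∀ n, a n ∈ (g n).1 := fun n => h1 _ _
    have hsub : ∀ n, (g (n+1)).1 ⊆ (g n).1 := fun n => h2 _ _
    have hlt : ∀ n, ∀ x ∈ (g (n+1)).1, a n < x := fun n => h3 _ _
    have hnest : ∀ m n, m ≤ n → (g n).1 ⊆ (g m).1 := by
      intro m n hmn
      induction n with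
      | zero => simp_all
      | succ n ih =>
        rcases Nat.lt_or_ge m (n+1) with h | h
        · exact (hsub n).trans (ih (Nat.lt_succ_iff.mp h))
        · have : m = n + 1 := le_antisymm hmn h
          subst this; exact subset_rfl
    have hgS : ∀ n, (g n).1 ⊆ S := fun n => hnest 0 n (Nat.zero_le n)
    have hamono : StrictMono a := by
      apply strictMono_nat_of_lt_succ
      intro n
      exact hlt n _ (hmem (n+1))
    -- pigeonhole on b
    obtain ⟨v, hv⟩ := Finite.exists_infinite_fiber b
    have hI : (b ⁻¹' {v}).Infinite := Set.infinite_coe_iff.mp hv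
    refine ⟨a '' (b ⁻¹' {v}), ?_, hI.image (hamono.injective.injOn), v, ?_⟩
    · rintro x ⟨n, _, rfl⟩
      exact hgS n (hmem n)
    · intro F hF hcard
      have hFne : F.Nonempty := Finset.card_pos.mp (by omega)
      obtain ⟨m, hmI, hma⟩ := hF (F.min'_mem hFne)
      have key : ↑(F.erase (F.min' hFne)) ⊆ (g (m+1)).1 := by
        intro y hy
        have hyF : y ∈ F := Finset.mem_of_mem_erase (by exact_mod_cast hy)
        have hyne : y ≠ F.min' hFne := Finset.ne_of_mem_erase (by exact_mod_cast hy)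
        obtain ⟨n, hnI, hna⟩ := hF hyF
        have hge : F.min' hFne ≤ y := F.min'_le y hyF
        have hlt' : a m < a n := by
          rw [hma, hna]; exact lt_of_le_of_ne hge (Ne.symm hyne)
        have hmn : m < n := hamono.lt_iff_lt.mp hlt'
        rw [← hna]
        exact hnest (m+1) n hmn (hmem n)
      have hce : (F.erase (F.min' hFne)).card = k := by
        rw [Finset.card_erase_of_mem (F.min'_mem hFne), hcard]; omega
      have hmF : a m ∈ F := by rw [hma]; exact F.min'_mem hFne
      rw [← hma] at key hce
      have h6 : c (insert (a m) (F.erase (a m))) = b m := h5 (g m).1 (g m).2 _ key hce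
      rw [Finset.insert_erase hmF] at h6
      rw [h6]
      exact hmI
    
/-- `FSk k B` is the set of all sums of `k`-element subsets of `B`. -/
def FSk (k : ℕ) (B : Set ℕ) : Set ℕ :=
  {n | ∃ F : Finset ℕ, ↑F ⊆ B ∧ F.card = k ∧ ∑ i ∈ F, i = n}

/-- `A ⊆ ω` is an IP_k-set if there is an infinite `B ⊆ ω` with `FSk k B ⊆ A`. -/
def IsIPk (k : ℕ) (A : Set ℕ) : Prop :=
  ∃ B : Set ℕ, B.Infinite ∧ FSk k B ⊆ A

/-- For every `k ≥ 2`, the family `H_k` of non-IP_k-sets is an ideal on `ω`: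
it is closed under taking subsets and under finite unions. -/
theorem Hk_isIdeal (k : ℕ) (hk : 2 ≤ k) :
    (∀ A B : Set ℕ, ¬ IsIPk k A → B ⊆ A → ¬ IsIPk k B) ∧
    (∀ A B : Set ℕ, ¬ IsIPk k A → ¬ IsIPk k B → ¬ IsIPk k (A ∪ B)) := by
  constructor
  · rintro A B hA hBA ⟨C, hC, hFS⟩
    exact hA ⟨C, hC, hFS.trans hBA⟩
  · rintro A B hA hB ⟨C, hC, hFS⟩
    classical
    obtain ⟨T, hTC, hTinf, v, hv⟩ :=
      ramsey_infinite k (fun F => decide ((∑ i ∈ F, i) ∈ A)) C hC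
    cases v with
    | true =>
      apply hA
      refine ⟨T, hTinf, ?_⟩
      rintro n ⟨F, hFT, hcard, rfl⟩
      have := hv F hFT hcard
      simpa using this
    | false =>
      apply hB
      refine ⟨T, hTinf, ?_⟩
      rintro n ⟨F, hFT, hcard, rfl⟩
      have hnotA : (∑ i ∈ F, i) ∉ A := by
        have := hv F hFT hcard
        simpa using this
      have hAB : (∑ i ∈ F, i) ∈ A ∪ B := hFS ⟨F, hFT.trans hTC, hcard, rfl⟩
      rcases hAB with h | h
      · exact absurd h hnotA
      · exact h
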